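/- Let Λ be an irredundant (k,n)-truncated checkerboard Young diagram that is not full, and let m = |A(Λ)| ≥ 1 be the number of positions where a white box may be added. Identify span_{Z/2Z} Ā(Λ) with the exterior-algebra-like space (Z/2Z)^{2^m} with basis Λ_S for S ⊆ {1,…,m} (Λ_S = Λ with white boxes added at positions in S). Then within this component Ker(Sq²) = Im(Sq²), and the set {Sq²(Λ_S) : S ⊆ {2,…,m}} is a Z/2Z-basis of Ker(Sq²) ∩ span Ā(Λ). -/

import Mathlib

open Finset

private lemma sum_erase_symm_zero {α : Type*} [DecidableEq α] {V : Type*} [AddCommGroup V]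
    [Module (ZMod 2) V] (s : Finset α) (f : α → α → V) (hf : ∀ j k, f j k = f k j) :
    ∑ j ∈ s, ∑ k ∈ s.erase j, f j k = 0 := by
  have two : ∀ v : V, v + v = 0 := fun v => by
    rw [← two_smul (ZMod 2) v, show (2 : ZMod 2) = 0 from rfl, zero_smul]
  rw [Finset.sum_sigma']
  refine Finset.sum_involution (fun x _ => ⟨x.2, x.1⟩) ?_ ?_ ?_ ?_
  · intro a _
    rw [hf]
    exact two _
  · intro a ha _
    intro heq
    have h1 := Finset.mem_sigma.mp ha
    have h2 : a.2 ≠ a.1 := (Finset.mem_erase.mp h1.2).1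
    exact h2 (congrArg Sigma.fst heq)
  · intro a ha
    have h1 := Finset.mem_sigma.mp ha
    have h2 := Finset.mem_erase.mp h1.2
    exact Finset.mem_sigma.mpr ⟨h2.2, Finset.mem_erase.mpr ⟨fun hh => h2.1 hh.symm, h1.1⟩⟩
  · intro a _
    rfl

/-- Koszul-type model of the component `span Ā(Λ)` of an irredundant,
not full, diagram with `m+1 ≥ 1` addable positions: basis `Λ_S` indexed by subsets
`S ⊆ {1,…,m+1}` (here `S : Finset (Fin (m+1))`), with
`Sq²(Λ_S) = Σ_{j ∉ S} Λ_{S ∪ {j}}`.  Then `Ker Sq² = Im Sq²`, and the family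
`{Sq²(Λ_S) : 1 ∉ S}` (`1` being the first addable position, here `0 : Fin (m+1)`)
is a `ℤ/2`-basis of `Ker Sq²`. -/
theorem stmt13 (m : ℕ) (V : Type*) [AddCommGroup V] [Module (ZMod 2) V]
    (B : Module.Basis (Finset (Fin (m + 1))) (ZMod 2) V)
    (Sq : V →ₗ[ZMod 2] V)
    (hSq : ∀ S : Finset (Fin (m + 1)), Sq (B S) = ∑ j ∈ Sᶜ, B (insert j S)) :
    LinearMap.ker Sq = LinearMap.range Sq ∧
    LinearIndependent (ZMod 2)
      (fun S : {S : Finset (Fin (m + 1)) // 0 ∉ S} => Sq (B S.1)) ∧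
    Submodule.span (ZMod 2)
      (Set.range fun S : {S : Finset (Fin (m + 1)) // 0 ∉ S} => Sq (B S.1)) =
      LinearMap.ker Sq := by
  classical
  have two : ∀ v : V, v + v = 0 := fun v => by
    rw [← two_smul (ZMod 2) v, show (2 : ZMod 2) = 0 from rfl, zero_smul]
  -- Sq ∘ Sq = 0
  have hSq2 : ∀ x : V, Sq (Sq x) = 0 := by
    have hc : Sq ∘ₗ Sq = 0 := by
      apply B.ext
      intro S
      simp only [LinearMap.comp_apply, LinearMap.zero_apply, hSq, map_sum]
      rw [Finset.sum_congr rfl (fun j _ => by rw [Finset.compl_insert])]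
      exact sum_erase_symm_zero _ _ (fun j k => by rw [Finset.insert_comm])
    intro x
    simpa using DFunLike.congr_fun hc x
  -- contracting homotopy
  set h : V →ₗ[ZMod 2] V :=
    B.constr (ZMod 2) (fun S => if (0 : Fin (m + 1)) ∈ S then B (S.erase 0) else 0) with hhdef
  have hb : ∀ S, h (B S) = if (0 : Fin (m + 1)) ∈ S then B (S.erase 0) else 0 :=
    fun S => B.constr_basis (ZMod 2) _ S
  have key : ∀ x : V, Sq (h x) + h (Sq x) = x := by
    have hc : Sq ∘ₗ h + h ∘ₗ Sq = LinearMap.id := by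
      apply B.ext
      intro S
      simp only [LinearMap.add_apply, LinearMap.comp_apply, LinearMap.id_apply, hb, hSq,
        map_sum]
      by_cases h0 : (0 : Fin (m + 1)) ∈ S
      · rw [if_pos h0, hSq]
        have hcompl : (S.erase 0)ᶜ = insert 0 Sᶜ := by
          ext a
          simp [Finset.mem_erase, not_and_or, or_comm]
        have h0c : (0 : Fin (m + 1)) ∉ Sᶜ := by simp [h0]
        rw [hcompl, Finset.sum_insert h0c, Finset.insert_erase h0]
        have hsum : ∀ j ∈ Sᶜ,
            (if (0 : Fin (m + 1)) ∈ insert j S then B ((insert j S).erase 0) else 0)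
            = B (insert j (S.erase 0)) := by
          intro j hj
          have hj0 : j ≠ 0 := by
            rintro rfl
            exact (Finset.mem_compl.mp hj) h0
          rw [if_pos (Finset.mem_insert_of_mem h0), Finset.erase_insert_of_ne hj0]
        rw [Finset.sum_congr rfl hsum, add_assoc, two, add_zero]
      · rw [if_neg h0, map_zero, zero_add]
        have h0c : (0 : Fin (m + 1)) ∈ Sᶜ := by simp [h0]
        rw [Finset.sum_eq_single_of_mem 0 h0c]
        · rw [if_pos (Finset.mem_insert_self 0 S), Finset.erase_insert h0]
        · intro j _ hj0
          have h0n : (0 : Fin (m + 1)) ∉ insert j S := by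
            simp only [Finset.mem_insert]
            push_neg
            exact ⟨fun hh => hj0 hh.symm, h0⟩
          rw [if_neg h0n]
    intro x
    simpa using DFunLike.congr_fun hc x
  refine ⟨?_, ?_, ?_⟩
  · -- ker = range
    ext x
    constructor
    · intro hx
      have hx0 : Sq x = 0 := hx
      refine ⟨h x, ?_⟩
      have := key x
      rwa [hx0, map_zero, add_zero] at this
    · rintro ⟨y, rfl⟩
      exact LinearMap.mem_ker.mpr (hSq2 y)
  · -- linear independence
    refine LinearIndependent.of_comp h ?_
    have he : (h ∘ fun S : {S : Finset (Fin (m + 1)) // 0 ∉ S} => Sq (B S.1))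
        = fun S => B S.1 := by
      funext S
      have hk := key (B S.1)
      rw [hb, if_neg S.2, map_zero, zero_add] at hk
      simpa using hk
    rw [he]
    exact B.linearIndependent.comp Subtype.val Subtype.val_injective
  · -- span = ker
    apply le_antisymm
    · rw [Submodule.span_le]
      rintro _ ⟨S, rfl⟩
      exact LinearMap.mem_ker.mpr (hSq2 _)
    · intro x hx
      have hx0 : Sq x = 0 := hx
      have hxeq : Sq (h x) = x := by
        have := key x
        rwa [hx0, map_zero, add_zero] at this
      have hmap : Submodule.map h (Submodule.span (ZMod 2) (Set.range B)) ≤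
          Submodule.span (ZMod 2)
            (Set.range fun S : {S : Finset (Fin (m + 1)) // 0 ∉ S} => B S.1) := by
        rw [Submodule.map_span, Submodule.span_le]
        rintro _ ⟨_, ⟨T, rfl⟩, rfl⟩
        by_cases h0 : (0 : Fin (m + 1)) ∈ T
        · rw [hb, if_pos h0]
          exact Submodule.subset_span ⟨⟨T.erase 0, by simp⟩, rfl⟩
        · rw [hb, if_neg h0]
          exact Submodule.zero_mem _
      have hmem : h x ∈ Submodule.span (ZMod 2)
          (Set.range fun S : {S : Finset (Fin (m + 1)) // 0 ∉ S} => B S.1) :=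
        hmap ⟨x, by rw [B.span_eq]; trivial, rfl⟩
      have hfin : Sq (h x) ∈ Submodule.map Sq (Submodule.span (ZMod 2)
          (Set.range fun S : {S : Finset (Fin (m + 1)) // 0 ∉ S} => B S.1)) :=
        Submodule.mem_map_of_mem hmem
      rw [Submodule.map_span, ← Set.range_comp] at hfin
      rw [← hxeq]
      convert hfin using 3
      rfl
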